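/- Let 0 < m ≤ M, Δ > 0, T ≥ 1, and let p_1,…,p_T ∈ [m,M]. Set π = ln(M/m) + 1, M_t = max_{1≤τ≤t} p_τ for t ≥ 1, and M_0 = 0, and define v̄_t = Δ·(M_t − M_{t−1})/(π·p_t) for each t. Then ∑_{t=1}^T v̄_t ≤ Δ. (This is the feasibility of CR-Pursuit(ln θ + 1) for the classic one-way trading problem, showing it achieves the optimal competitive ratio ln θ + 1.) -/

import Mathlib

/-- Feasibility of CR-Pursuit(ln θ + 1) for the classic one-way trading problem:
the total quantity it sells never exceeds the inventory Δ. -/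
theorem stmt14 (m M Δ : ℝ) (hm : 0 < m) (hmM : m ≤ M) (hΔ : 0 < Δ)
    (T : ℕ) (hT : 1 ≤ T) (p : ℕ → ℝ) (hp : ∀ t < T, p t ∈ Set.Icc m M)
    (pi : ℝ) (hpiv : pi = Real.log (M / m) + 1)
    (Mf : ℕ → ℝ) (hMf0 : Mf 0 = 0)
    (hMf : ∀ t < T, Mf (t+1) = max (Mf t) (p t))
    (vb : ℕ → ℝ) (hvb : ∀ t < T, vb t = Δ * (Mf (t+1) - Mf t) / (pi * p t)) :
    ∑ t ∈ Finset.range T, vb t ≤ Δ := by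
  have hM : 0 < M := lt_of_lt_of_le hm hmM
  have hlog0 : 0 ≤ Real.log (M / m) := Real.log_nonneg ((one_le_div hm).2 hmM)
  have hpi1 : 1 ≤ pi := by rw [hpiv]; linarith
  have hpi : 0 < pi := lt_of_lt_of_le one_pos hpi1
  -- bounds on Mf
  have hMfb : ∀ t, 1 ≤ t → t ≤ T → m ≤ Mf t ∧ Mf t ≤ M := by
    intro t ht1 htT
    induction t with
    | zero => omega
    | succ n ih =>
      have hn : n < T := by omega
      rw [hMf n hn]
      have hpn := hp n hn
      rcases Nat.eq_zero_or_pos n with h0 | h1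
      · subst h0
        rw [hMf0]
        constructor
        · exact le_max_of_le_right hpn.1
        · exact max_le (le_of_lt hM) hpn.2
      · obtain ⟨hl, hu⟩ := ih h1 (le_of_lt hn)
        exact ⟨le_max_of_le_left hl, max_le hu hpn.2⟩
  have hmono : ∀ t < T, Mf t ≤ Mf (t + 1) := by
    intro t ht; rw [hMf t ht]; exact le_max_left _ _
  -- key term bound for t ≥ 1
  have hkey : ∀ t, 1 ≤ t → t < T →
      vb t ≤ Δ / pi * (Real.log (Mf (t+1)) - Real.log (Mf t)) := by
    intro t ht1 htT
    have hpt := hp t htT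
    have hptpos : 0 < p t := lt_of_lt_of_le hm hpt.1
    have hMft : 0 < Mf t := lt_of_lt_of_le hm (hMfb t ht1 (le_of_lt htT)).1
    rw [hvb t htT, hMf t htT]
    rcases le_or_gt (p t) (Mf t) with h | h
    · rw [max_eq_left h]
      simp
    · rw [max_eq_right (le_of_lt h)]
      have hlog := Real.log_le_sub_one_of_pos (div_pos hMft hptpos)
      rw [Real.log_div (ne_of_gt hMft) (ne_of_gt hptpos)] at hlog
      rw [div_eq_mul_inv, mul_inv, div_eq_mul_inv]
      have h1 : (Mf t) / (p t) - 1 = -((p t - Mf t) * (p t)⁻¹) := by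
        field_simp
        ring
      rw [h1] at hlog
      have h2 : (p t - Mf t) * (p t)⁻¹ ≤ Real.log (p t) - Real.log (Mf t) := by
        linarith
      have h3 : 0 ≤ Δ * pi⁻¹ := le_of_lt (mul_pos hΔ (inv_pos.2 hpi))
      calc Δ * (p t - Mf t) * (pi⁻¹ * (p t)⁻¹)
          = Δ * pi⁻¹ * ((p t - Mf t) * (p t)⁻¹) := by ring
        _ ≤ Δ * pi⁻¹ * (Real.log (p t) - Real.log (Mf t)) :=
            mul_le_mul_of_nonneg_left h2 h3
  -- vb 0 = Δ / pi
  have hvb0 : vb 0 = Δ / pi := by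
    have h0T : 0 < T := hT
    have hp0 := hp 0 h0T
    have hp0pos : 0 < p 0 := lt_of_lt_of_le hm hp0.1
    rw [hvb 0 h0T, hMf 0 h0T, hMf0, max_eq_right (le_of_lt hp0pos)]
    field_simp
    ring
  -- split the sum
  have hsplit : ∑ t ∈ Finset.range T, vb t
      = vb 0 + ∑ t ∈ Finset.Ico 1 T, vb t := by
    rw [Finset.range_eq_Ico, ← Finset.sum_Ico_consecutive _ (Nat.zero_le 1) hT,
      Finset.sum_Ico_succ_top (Nat.zero_le 0), Finset.Ico_self, Finset.sum_empty, zero_add]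
  have htel : ∑ t ∈ Finset.Ico 1 T,
      (Δ / pi * (Real.log (Mf (t+1)) - Real.log (Mf t)))
      = Δ / pi * (Real.log (Mf T) - Real.log (Mf 1)) := by
    rw [← Finset.mul_sum]
    congr 1
    rw [Finset.sum_Ico_eq_sub _ hT, Finset.sum_range_sub (fun i => Real.log (Mf i)),
      Finset.sum_range_sub (fun i => Real.log (Mf i))]
    ring
  have hsum2 : ∑ t ∈ Finset.Ico 1 T, vb t
      ≤ Δ / pi * (Real.log (Mf T) - Real.log (Mf 1)) := by
    rw [← htel]
    apply Finset.sum_le_sum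
    intro t ht
    rw [Finset.mem_Ico] at ht
    exact hkey t ht.1 ht.2
  have hMfT := hMfb T hT le_rfl
  have hMf1 := hMfb 1 le_rfl hT
  have hlogT : Real.log (Mf T) ≤ Real.log M := Real.log_le_log (lt_of_lt_of_le hm hMfT.1) hMfT.2
  have hlog1 : Real.log m ≤ Real.log (Mf 1) := Real.log_le_log hm hMf1.1
  have hdiv : Δ / pi * (Real.log (Mf T) - Real.log (Mf 1))
      ≤ Δ / pi * (Real.log M - Real.log m) :=
    mul_le_mul_of_nonneg_left (by linarith) (le_of_lt (div_pos hΔ hpi))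
  have hfin : Δ / pi + Δ / pi * (Real.log M - Real.log m) = Δ := by
    have hpieq : Real.log M - Real.log m = pi - 1 := by
      rw [hpiv, Real.log_div (ne_of_gt hM) (ne_of_gt hm)]; ring
    rw [hpieq]
    field_simp
    ring
  rw [hsplit, hvb0]
  linarith
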